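/- Let Σ_η be a real symmetric positive definite p×p matrix, Σ_ω a real symmetric positive definite n×n matrix, G a real p×n matrix with Gᵀ Σ_η⁻¹ G positive definite, α ∈ (0,1], and C a real symmetric positive definite n×n matrix satisfying C⁻¹ = Gᵀ Σ_η⁻¹ G + (α² C + Σ_ω)⁻¹. Then the matrix C⁻¹ − α (α² C + Σ_ω)⁻¹ is invertible and ‖(C⁻¹ − α (α² C + Σ_ω)⁻¹)⁻¹‖₂ ≤ ‖(Gᵀ Σ_η⁻¹ G)⁻¹‖₂. -/

import Mathlib

open Matrix

/-- The spectral norm of a real matrix: the operator norm induced by the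
Euclidean norms on the domain and codomain. -/
noncomputable def specNorm {m n : ℕ} (A : Matrix (Fin m) (Fin n) ℝ) : ℝ :=
  ‖LinearMap.toContinuousLinearMap (Matrix.toEuclideanLin A)‖
open Matrix
open scoped InnerProductSpace

noncomputable def T {n : ℕ} (Q : Matrix (Fin n) (Fin n) ℝ) :
    EuclideanSpace ℝ (Fin n) →L[ℝ] EuclideanSpace ℝ (Fin n) := toEuclideanCLM (𝕜 := ℝ) Q

lemma inner_T {n : ℕ} (Q : Matrix (Fin n) (Fin n) ℝ) (x y : EuclideanSpace ℝ (Fin n)) :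
    ⟪T Q x, y⟫_ℝ = (Q *ᵥ x) ⬝ᵥ y := by
  simp [T, PiLp.inner_apply, dotProduct]
  exact Finset.sum_congr rfl fun _ _ => mul_comm _ _

lemma Tsymm {n : ℕ} {Q : Matrix (Fin n) (Fin n) ℝ} (hQ : Q.IsHermitian)
    (x y : EuclideanSpace ℝ (Fin n)) : ⟪T Q x, y⟫_ℝ = ⟪x, T Q y⟫_ℝ := by
  have h : _root_.IsSelfAdjoint (T Q) := by
    rw [_root_.IsSelfAdjoint]
    show star (toEuclideanCLM (𝕜 := ℝ) Q) = toEuclideanCLM (𝕜 := ℝ) Q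
    rw [← map_star (toEuclideanCLM (𝕜 := ℝ))]
    exact congrArg _ hQ
  exact h.isSymmetric x y

lemma Tnonneg {n : ℕ} {Q : Matrix (Fin n) (Fin n) ℝ} (hQ : Q.PosSemidef)
    (x : EuclideanSpace ℝ (Fin n)) : 0 ≤ ⟪T Q x, x⟫_ℝ := by
  rw [inner_T]
  simpa [dotProduct, mul_comm] using hQ.dotProduct_mulVec_nonneg x.ofLp

lemma Tmul {n : ℕ} (A B : Matrix (Fin n) (Fin n) ℝ) (x : EuclideanSpace ℝ (Fin n)) :
    T (A * B) x = T A (T B x) := by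
  simp [T, _root_.map_mul]

lemma aux_norm_le {n : ℕ} {A M : Matrix (Fin n) (Fin n) ℝ} (hA : A.PosDef)
    (hMA : (M - A).PosSemidef) : ‖T M⁻¹‖ ≤ ‖T A⁻¹‖ := by
  have hMpd : M.PosDef := by
    have := hA.add_posSemidef hMA
    simpa using this
  have hAinv : A⁻¹.PosDef := hA.inv
  set c : ℝ := ‖T A⁻¹‖ with hc
  have hc0 : 0 ≤ c := norm_nonneg _
  obtain ⟨S, hS, hSS⟩ : ∃ S : Matrix (Fin n) (Fin n) ℝ, S.PosSemidef ∧ S * S = A⁻¹ := by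
    open scoped MatrixOrder in
    exact ⟨CFC.sqrt A⁻¹, (CFC.sqrt_nonneg _).posSemidef,
      CFC.sqrt_mul_sqrt_self _ hAinv.posSemidef.nonneg⟩
  have hTform : ∀ v w : EuclideanSpace ℝ (Fin n), ⟪T A⁻¹ v, w⟫_ℝ = ⟪T S v, T S w⟫_ℝ := by
    intro v w
    rw [← hSS, Tmul, Tsymm hS.isHermitian]
  have hinvA : A⁻¹ * A = 1 := nonsing_inv_mul A ((Matrix.isUnit_iff_isUnit_det A).mp hA.isUnit)
  have key1 : ∀ x : EuclideanSpace ℝ (Fin n), ‖x‖ ^ 2 ≤ c * ⟪T A x, x⟫_ℝ := by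
    intro x
    set u := T A x with hu'
    have hu : T A⁻¹ u = x := by
      rw [hu', ← Tmul, hinvA]
      simp [T, _root_.map_one]
    have e1 : ‖x‖ ^ 2 ≤ ‖T S u‖ * ‖T S x‖ := by
      rw [← real_inner_self_eq_norm_sq, ← hu, hTform]
      exact real_inner_le_norm _ _
    have e2 : ‖T S u‖ ^ 2 = ⟪T A x, x⟫_ℝ := by
      rw [← real_inner_self_eq_norm_sq, ← hTform, hu, ← hu']
      exact real_inner_comm _ _
    have e3 : ‖T S x‖ ^ 2 ≤ c * ‖x‖ ^ 2 := by
      rw [← real_inner_self_eq_norm_sq, ← hTform]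
      calc ⟪T A⁻¹ x, x⟫_ℝ ≤ ‖T A⁻¹ x‖ * ‖x‖ := real_inner_le_norm _ _
        _ ≤ (c * ‖x‖) * ‖x‖ := by
            have := (T A⁻¹).le_opNorm x
            nlinarith [norm_nonneg x]
        _ = c * ‖x‖ ^ 2 := by ring
    have ht : (0:ℝ) ≤ ⟪T A x, x⟫_ℝ := by rw [← e2]; positivity
    rcases eq_or_ne x 0 with rfl | hx
    · simpa using mul_nonneg hc0 ht
    · have hxn : 0 < ‖x‖ := norm_pos_iff.mpr hx
      have e4 : ‖x‖ ^ 2 * ‖x‖ ^ 2 ≤ ⟪T A x, x⟫_ℝ * ‖T S x‖ ^ 2 := by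
        calc ‖x‖ ^ 2 * ‖x‖ ^ 2 ≤ (‖T S u‖ * ‖T S x‖) * (‖T S u‖ * ‖T S x‖) :=
              mul_le_mul e1 e1 (sq_nonneg ‖x‖) (by positivity)
          _ = ‖T S u‖ ^ 2 * ‖T S x‖ ^ 2 := by ring
          _ = ⟪T A x, x⟫_ℝ * ‖T S x‖ ^ 2 := by rw [e2]
      have e5 : ⟪T A x, x⟫_ℝ * ‖T S x‖ ^ 2 ≤ ⟪T A x, x⟫_ℝ * (c * ‖x‖ ^ 2) :=
        mul_le_mul_of_nonneg_left e3 ht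
      nlinarith [mul_pos hxn hxn, e4, e5, ht, hc0]
  have key2 : ∀ x : EuclideanSpace ℝ (Fin n), ‖x‖ ≤ c * ‖T M x‖ := by
    intro x
    have h1 : ⟪T A x, x⟫_ℝ ≤ ⟪T M x, x⟫_ℝ := by
      have h0 := Tnonneg hMA x
      have hTMA : T (M - A) x = T M x - T A x := by simp [T, map_sub]
      rw [hTMA, inner_sub_left] at h0
      linarith
    have h2 : ‖x‖ ^ 2 ≤ c * (‖T M x‖ * ‖x‖) := by
      calc ‖x‖ ^ 2 ≤ c * ⟪T A x, x⟫_ℝ := key1 x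
        _ ≤ c * ⟪T M x, x⟫_ℝ := by nlinarith
        _ ≤ c * (‖T M x‖ * ‖x‖) := by
            have := real_inner_le_norm (T M x) x
            nlinarith
    rcases eq_or_ne x 0 with rfl | hx
    · simp only [norm_zero]
      positivity
    · have hxn : 0 < ‖x‖ := norm_pos_iff.mpr hx
      nlinarith
  have hMunit : IsUnit M.det := (Matrix.isUnit_iff_isUnit_det M).mp hMpd.isUnit
  refine ContinuousLinearMap.opNorm_le_bound _ hc0 fun y => ?_
  have hy : T M (T M⁻¹ y) = y := by
    rw [← Tmul, mul_nonsing_inv M hMunit]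
    simp [T, _root_.map_one]
  calc ‖T M⁻¹ y‖ ≤ c * ‖T M (T M⁻¹ y)‖ := key2 _
    _ = c * ‖y‖ := by rw [hy]

lemma posDef_smul' {n : ℕ} {Q : Matrix (Fin n) (Fin n) ℝ} (hQ : Q.PosDef) {c : ℝ}
    (hc : 0 < c) : (c • Q).PosDef := by
  refine Matrix.PosDef.of_dotProduct_mulVec_pos ?_ fun x hx => ?_
  · rw [Matrix.IsHermitian, conjTranspose_smul]
    rw [hQ.1.eq]
    norm_num
  · rw [smul_mulVec, dotProduct_smul, smul_eq_mul]
    exact mul_pos hc (hQ.dotProduct_mulVec_pos hx)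

lemma posSemidef_smul' {n : ℕ} {Q : Matrix (Fin n) (Fin n) ℝ} (hQ : Q.PosSemidef) {c : ℝ}
    (hc : 0 ≤ c) : (c • Q).PosSemidef := by
  refine Matrix.PosSemidef.of_dotProduct_mulVec_nonneg ?_ fun x => ?_
  · rw [Matrix.IsHermitian, conjTranspose_smul]
    rw [hQ.1.eq]
    norm_num
  · rw [smul_mulVec, dotProduct_smul, smul_eq_mul]
    exact mul_nonneg hc (hQ.dotProduct_mulVec_nonneg x)

theorem stmt_10 {p n : ℕ} (Sη : Matrix (Fin p) (Fin p) ℝ) (hSη : Sη.PosDef)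
    (Sω : Matrix (Fin n) (Fin n) ℝ) (hSω : Sω.PosDef)
    (G : Matrix (Fin p) (Fin n) ℝ) (hG : (Gᵀ * Sη⁻¹ * G).PosDef)
    (α : ℝ) (hα0 : 0 < α) (hα1 : α ≤ 1)
    (C : Matrix (Fin n) (Fin n) ℝ) (hC : C.PosDef)
    (hfix : C⁻¹ = Gᵀ * Sη⁻¹ * G + (α ^ 2 • C + Sω)⁻¹) :
    IsUnit (C⁻¹ - α • (α ^ 2 • C + Sω)⁻¹) ∧
    specNorm (C⁻¹ - α • (α ^ 2 • C + Sω)⁻¹)⁻¹ ≤ specNorm (Gᵀ * Sη⁻¹ * G)⁻¹ := by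
  set A := Gᵀ * Sη⁻¹ * G with hAdef
  set D := α ^ 2 • C + Sω with hDdef
  have hD : D.PosDef := (posDef_smul' hC (by positivity)).add_posSemidef hSω.posSemidef
  have hDinv : D⁻¹.PosDef := hD.inv
  have hMeq : C⁻¹ - α • D⁻¹ = A + (1 - α) • D⁻¹ := by
    rw [hfix]
    module
  have hMA : ((C⁻¹ - α • D⁻¹) - A).PosSemidef := by
    have h1 : (C⁻¹ - α • D⁻¹) - A = (1 - α) • D⁻¹ := by
      rw [hMeq]
      abel
    rw [h1]
    exact posSemidef_smul' hDinv.posSemidef (by linarith)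
  have hMpd : (C⁻¹ - α • D⁻¹).PosDef := by
    have := hG.add_posSemidef hMA
    simpa using this
  refine ⟨hMpd.isUnit, ?_⟩
  exact aux_norm_le hG hMA
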